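/- Let R be a unital subring of ℚ and G an abelian group. G ⊗_ℤ R = 0 if and only if every element of G is annihilated by some product of primes invertible in R. -/

import Mathlib

open TensorProduct

/-- The submonoid of `ℤ` of nonzero integers all of whose prime factors are invertible in `R`. -/
def stmt17S (R : Subring ℚ) : Submonoid ℤ where
  carrier := {x | x ≠ 0 ∧ ∀ q : ℕ, q.Prime → (q : ℤ) ∣ x → ((q : ℚ)⁻¹ ∈ R)}
  one_mem' := ⟨one_ne_zero, fun q hq hdvd => by
    have : q ∣ 1 := by exact_mod_cast hdvd
    exact absurd (Nat.eq_one_of_dvd_one this) hq.one_lt.ne'⟩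
  mul_mem' := fun {a b} ha hb => ⟨mul_ne_zero ha.1 hb.1, fun q hq hdvd => by
    rcases (Nat.prime_iff_prime_int.mp hq).dvd_mul.mp hdvd with h | h
    · exact ha.2 q hq h
    · exact hb.2 q hq h⟩

lemma stmt17_inv_nat (R : Subring ℚ) : ∀ n : ℕ, n ≠ 0 →
    (∀ q : ℕ, q.Prime → q ∣ n → ((q : ℚ)⁻¹ ∈ R)) → ((n : ℚ)⁻¹ ∈ R) := by
  intro n
  induction n using Nat.strong_induction_on with
  | _ n ih =>
    intro hn hprime
    rcases eq_or_ne n 1 with rfl | hn1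
    · simpa using R.one_mem
    · obtain ⟨p, hp, hpd⟩ := n.exists_prime_and_dvd hn1
      obtain ⟨m, rfl⟩ := hpd
      have hm : m ≠ 0 := by rintro rfl; simp at hn
      have hmlt : m < p * m := lt_mul_of_one_lt_left (Nat.pos_of_ne_zero hm) hp.one_lt
      have hmin : ((m : ℚ)⁻¹ ∈ R) :=
        ih m hmlt hm (fun q hq hdvd => hprime q hq (hdvd.mul_left p))
      have hpin : ((p : ℚ)⁻¹ ∈ R) := hprime p hp ⟨m, rfl⟩
      have : ((p * m : ℕ) : ℚ)⁻¹ = (p : ℚ)⁻¹ * (m : ℚ)⁻¹ := by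
        push_cast; rw [mul_inv]
      rw [this]
      exact R.mul_mem hpin hmin

lemma stmt17_inv (R : Subring ℚ) {s : ℤ} (hs : s ∈ stmt17S R) : ((s : ℚ)⁻¹ ∈ R) := by
  have h := stmt17_inv_nat R s.natAbs (by simpa using hs.1)
    (fun q hq hdvd => hs.2 q hq ((Int.natCast_dvd_natCast.mpr hdvd).trans (Int.natAbs_dvd.mpr dvd_rfl)))
  rcases Int.natAbs_eq s with he | he
  · rw [he, Int.cast_natCast]; exact h
  · rw [he, Int.cast_neg, Int.cast_natCast, inv_neg]; exact R.neg_mem h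

lemma stmt17_den_mem (R : Subring ℚ) (z : R) : (((z : ℚ).den : ℤ)) ∈ stmt17S R := by
  set x : ℚ := (z : ℚ) with hx
  have hden : (x.den : ℚ) ≠ 0 := by exact_mod_cast x.den_nz
  have hcop : IsCoprime x.num (x.den : ℤ) := by
    rw [Int.isCoprime_iff_gcd_eq_one]
    exact x.reduced
  obtain ⟨u, v, huv⟩ := hcop
  have hxd : x * (x.den : ℚ) = (x.num : ℚ) := Rat.mul_den_eq_num x
  have h1 : ((x.den : ℚ)) * ((u : ℚ) * x + (v : ℚ)) = 1 := by
    have hc : (u : ℚ) * (x.num : ℚ) + (v : ℚ) * (x.den : ℚ) = 1 := by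
      have := congrArg (Int.cast : ℤ → ℚ) huv
      push_cast at this
      exact this
    calc (x.den : ℚ) * ((u : ℚ) * x + (v : ℚ))
        = (u : ℚ) * (x * (x.den : ℚ)) + (v : ℚ) * (x.den : ℚ) := by ring
      _ = 1 := by rw [hxd]; exact hc
  have hinvden : ((x.den : ℚ)⁻¹ ∈ R) := by
    rw [inv_eq_of_mul_eq_one_right h1]
    exact R.add_mem (R.mul_mem (intCast_mem R u) z.2) (intCast_mem R v)
  refine ⟨by exact_mod_cast x.den_nz, fun q hq hdvd => ?_⟩
  have hqd : q ∣ x.den := by exact_mod_cast hdvd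
  obtain ⟨m, hm⟩ := hqd
  have hq0 : (q : ℚ) ≠ 0 := by exact_mod_cast hq.pos.ne'
  have hqm : (q : ℚ)⁻¹ = (m : ℚ) * (x.den : ℚ)⁻¹ := by
    have hmc : (x.den : ℚ) = (q : ℚ) * (m : ℚ) := by exact_mod_cast congrArg (Nat.cast : ℕ → ℚ) hm
    have hm0 : (m : ℚ) ≠ 0 := by
      rintro h
      rw [h, mul_zero] at hmc
      exact hden hmc
    rw [hmc, mul_inv]
    field_simp
  rw [hqm]
  exact R.mul_mem (natCast_mem R m) hinvden

lemma stmt17_isLocalization (R : Subring ℚ) : IsLocalization (stmt17S R) R where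
  map_units := fun s => by
    refine isUnit_iff_exists_inv.mpr ⟨⟨((s : ℤ) : ℚ)⁻¹, stmt17_inv R s.2⟩, ?_⟩
    ext
    have h1 : (((algebraMap ℤ R) (s : ℤ) : R) : ℚ) = ((s : ℤ) : ℚ) := by
      simp [algebraMap_int_eq, map_intCast]
    show (((algebraMap ℤ R) (s : ℤ) : R) : ℚ) * ((s : ℤ) : ℚ)⁻¹ = 1
    rw [h1]
    exact mul_inv_cancel₀ (by exact_mod_cast s.2.1)
  surj := fun z => by
    refine ⟨⟨(z : ℚ).num, ⟨((z : ℚ).den : ℤ), stmt17_den_mem R z⟩⟩, ?_⟩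
    ext
    show ((z : ℚ)) * (((algebraMap ℤ R) ((z : ℚ).den : ℤ) : R) : ℚ) =
      (((algebraMap ℤ R) (z : ℚ).num : R) : ℚ)
    have h1 : (((algebraMap ℤ R) ((z : ℚ).den : ℤ) : R) : ℚ) = (((z : ℚ).den : ℕ) : ℚ) := by
      simp [algebraMap_int_eq, map_intCast]
    have h2 : (((algebraMap ℤ R) (z : ℚ).num : R) : ℚ) = ((z : ℚ).num : ℚ) := by
      simp [algebraMap_int_eq, map_intCast]
    rw [h1, h2]
    exact Rat.mul_den_eq_num (z : ℚ)
  exists_of_eq := fun {x y} h => by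
    refine ⟨1, ?_⟩
    have h2 : ((x : ℚ)) = ((y : ℚ)) := by
      have := congrArg (fun r : R => (r : ℚ)) h
      simpa [algebraMap_int_eq, map_intCast] using this
    have : x = y := by exact_mod_cast h2
    rw [this]

/-- For a unital subring `R ⊆ ℚ` and an abelian group `G`, we have `G ⊗_ℤ R = 0` iff every
element of `G` is annihilated by some product of primes invertible in `R`. -/
theorem stmt17 (R : Subring ℚ) (G : Type) [AddCommGroup G] :
    Subsingleton (G ⊗[ℤ] R) ↔
      ∀ g : G, ∃ n : ℕ, n ≠ 0 ∧ (∀ q : ℕ, q.Prime → q ∣ n → ((q : ℚ)⁻¹ ∈ R)) ∧ n • g = 0 := by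
  have hloc := stmt17_isLocalization R
  set S := stmt17S R with hS
  let f : G →ₗ[ℤ] R ⊗[ℤ] G := TensorProduct.mk ℤ R G 1
  have hbc : IsBaseChange R f := TensorProduct.isBaseChange ℤ G R
  have hlm : IsLocalizedModule S f := (isLocalizedModule_iff_isBaseChange S R f).mpr hbc
  have key : Subsingleton (G ⊗[ℤ] R) ↔ ∀ m : G, ∃ r ∈ S, r • m = 0 := by
    constructor
    · intro hsub g
      have h0 : f g = 0 := by
        have : Subsingleton (R ⊗[ℤ] G) :=
          (Equiv.subsingleton_congr (TensorProduct.comm ℤ G R).toEquiv).mp hsub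
        exact Subsingleton.elim _ _
      obtain ⟨s, hs⟩ := (IsLocalizedModule.eq_zero_iff S f).mp h0
      exact ⟨(s : ℤ), s.2, hs⟩
    · intro h
      have hsub : Subsingleton (R ⊗[ℤ] G) := by
        rw [subsingleton_iff_forall_eq 0]
        intro x
        obtain ⟨⟨m, s⟩, rfl⟩ := IsLocalizedModule.mk'_surjective S f x
        obtain ⟨r, hr, hrg⟩ := h m
        exact (IsLocalizedModule.mk'_eq_zero' f s).mpr ⟨⟨r, hr⟩, hrg⟩
      exact (Equiv.subsingleton_congr (TensorProduct.comm ℤ G R).toEquiv).mpr hsub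
  rw [key]
  constructor
  · intro h g
    obtain ⟨r, hr, hrg⟩ := h g
    refine ⟨r.natAbs, by simpa using hr.1,
      fun q hq hdvd => hr.2 q hq ((Int.natCast_dvd_natCast.mpr hdvd).trans (Int.natAbs_dvd.mpr dvd_rfl)), ?_⟩
    rcases Int.natAbs_eq r with he | he
    · rw [← natCast_zsmul, ← he]; exact hrg
    · rw [← natCast_zsmul]
      have h3 : (r.natAbs : ℤ) = -r := by omega
      rw [h3, neg_smul, hrg, neg_zero]
  · intro h g
    obtain ⟨n, hn, hprime, hng⟩ := h g
    refine ⟨(n : ℤ), ⟨by exact_mod_cast hn, fun q hq hdvd => hprime q hq (by exact_mod_cast hdvd)⟩, ?_⟩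
    rw [natCast_zsmul]; exact hng
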